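/- Let L : ℝ^d → ℝ be differentiable with an L-Lipschitz gradient, lower-bounded by L*. For gradient descent Θ_{t+1} = Θ_t - η ∇L(Θ_t) with step size η ≤ 1/L, the iterates satisfy min_{t=0,...,T-1} ‖∇L(Θ_t)‖² ≤ 2(L(Θ_0) - L*)/(η T). -/

import Mathlib

open intervalIntegral

lemma descent_lemma (d : ℕ) (f : EuclideanSpace ℝ (Fin d) → ℝ)
    (hdiff : Differentiable ℝ f) (Lc : ℝ) (hLc : 0 < Lc)
    (hlip : ∀ x y, ‖gradient f x - gradient f y‖ ≤ Lc * ‖x - y‖)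
    (x v : EuclideanSpace ℝ (Fin d)) :
    f (x + v) ≤ f x + inner ℝ (gradient f x) v + Lc / 2 * ‖v‖ ^ 2 := by
  set G : ℝ → ℝ := fun s => inner ℝ (gradient f (x + s • v)) v with hG
  have hgradlip : LipschitzWith (Real.toNNReal Lc) (gradient f) := by
    apply LipschitzWith.of_dist_le_mul
    intro a b
    simpa [dist_eq_norm, Real.coe_toNNReal _ hLc.le] using hlip a b
  have hGcont : Continuous G := by
    apply Continuous.inner
    · exact hgradlip.continuous.comp (by continuity)
    · exact continuous_const
  have hderiv : ∀ s : ℝ, HasDerivAt (fun s : ℝ => f (x + s • v)) (G s) s := by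
    intro s
    have hline : HasDerivAt (fun s : ℝ => x + s • v) v s := by
      simpa using ((hasDerivAt_id s).smul_const v).const_add x
    have hg := (hdiff (x + s • v)).hasGradientAt
    rw [hasGradientAt_iff_hasFDerivAt] at hg
    have := hg.comp_hasDerivAt s hline
    convert this using 1
    · rfl
    · rfl
    · rfl
    · rfl
  have hint : f (x + v) - f x = ∫ s in (0:ℝ)..1, G s := by
    rw [intervalIntegral.integral_eq_sub_of_hasDerivAt
      (fun s _ => hderiv s) (hGcont.intervalIntegrable 0 1)]
    simp
  have hbound : ∀ s ∈ Set.Icc (0:ℝ) 1, G s ≤ inner ℝ (gradient f x) v + Lc * s * ‖v‖ ^ 2 := by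
    intro s hs
    have h1 : G s - inner ℝ (gradient f x) v
        = inner ℝ (gradient f (x + s • v) - gradient f x) v := by
      rw [inner_sub_left]
    have h2 : inner ℝ (gradient f (x + s • v) - gradient f x) v
        ≤ ‖gradient f (x + s • v) - gradient f x‖ * ‖v‖ := real_inner_le_norm _ _
    have h3 : ‖gradient f (x + s • v) - gradient f x‖ ≤ Lc * (s * ‖v‖) := by
      have := hlip (x + s • v) x
      simpa [norm_smul, abs_of_nonneg hs.1] using this
    nlinarith [norm_nonneg v, mul_le_mul_of_nonneg_right h3 (norm_nonneg v)]
  have hmono : (∫ s in (0:ℝ)..1, G s)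
      ≤ ∫ s in (0:ℝ)..1, (inner ℝ (gradient f x) v + Lc * s * ‖v‖ ^ 2) := by
    apply intervalIntegral.integral_mono_on (by norm_num)
      (hGcont.intervalIntegrable 0 1)
      ((by continuity : Continuous fun s : ℝ => inner ℝ (gradient f x) v + Lc * s * ‖v‖ ^ 2).intervalIntegrable 0 1)
    exact hbound
  have hval : (∫ s in (0:ℝ)..1, (inner ℝ (gradient f x) v + Lc * s * ‖v‖ ^ 2))
      = inner ℝ (gradient f x) v + Lc / 2 * ‖v‖ ^ 2 := by
    have : (fun s : ℝ => inner ℝ (gradient f x) v + Lc * s * ‖v‖ ^ 2)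
        = fun s : ℝ => inner ℝ (gradient f x) v + (Lc * ‖v‖ ^ 2) * s := by
      funext s; ring
    rw [this, intervalIntegral.integral_add (intervalIntegrable_const)
      ((intervalIntegral.intervalIntegrable_id).const_mul _),
      intervalIntegral.integral_const, intervalIntegral.integral_const_mul, integral_id]
    simp; ring
  linarith [hint ▸ hmono.trans_eq hval]

/-- Convergence of gradient descent: if `L` is differentiable with `Lc`-Lipschitz
gradient and lower bound `Lstar`, and `Θ_{t+1} = Θ_t - η ∇L(Θ_t)` with `0 < η ≤ 1/Lc`,
then `min_{t<T} ‖∇L(Θ_t)‖² ≤ 2(L(Θ_0) - Lstar)/(η T)`. -/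
theorem gradient_descent_convergence (d : ℕ)
    (L : EuclideanSpace ℝ (Fin d) → ℝ) (hdiff : Differentiable ℝ L)
    (Lc : ℝ) (hLc : 0 < Lc)
    (hlip : ∀ x y, ‖gradient L x - gradient L y‖ ≤ Lc * ‖x - y‖)
    (Lstar : ℝ) (hlb : ∀ x, Lstar ≤ L x)
    (η : ℝ) (hη : 0 < η) (hηL : η ≤ 1 / Lc)
    (Θ : ℕ → EuclideanSpace ℝ (Fin d))
    (hstep : ∀ t, Θ (t + 1) = Θ t - η • gradient L (Θ t))
    (T : ℕ) (hT : 0 < T) :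
    (Finset.range T).inf' (Finset.nonempty_range_iff.mpr (Nat.pos_iff_ne_zero.mp hT))
        (fun t => ‖gradient L (Θ t)‖ ^ 2)
      ≤ 2 * (L (Θ 0) - Lstar) / (η * T) := by
  have hstep' : ∀ t, L (Θ (t + 1)) ≤ L (Θ t) - η / 2 * ‖gradient L (Θ t)‖ ^ 2 := by
    intro t
    have h := descent_lemma d L hdiff Lc hLc hlip (Θ t) (-(η • gradient L (Θ t)))
    have hx : Θ t + -(η • gradient L (Θ t)) = Θ (t + 1) := by
      rw [hstep t, sub_eq_add_neg]
    rw [hx] at h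
    have hinner : (inner ℝ (gradient L (Θ t)) (-(η • gradient L (Θ t))) : ℝ)
        = -(η * ‖gradient L (Θ t)‖ ^ 2) := by
      rw [inner_neg_right, real_inner_smul_right, real_inner_self_eq_norm_sq]
    rw [hinner, norm_neg, norm_smul] at h
    have hηLc : η * Lc ≤ 1 := by
      rw [le_div_iff₀ hLc] at hηL; linarith
    have hns : ‖gradient L (Θ t)‖ ^ 2 ≥ 0 := by positivity
    have habs : ‖η‖ = η := abs_of_pos hη
    rw [habs] at h
    nlinarith [h]
  have hsum : ∀ n : ℕ, η / 2 * ∑ t ∈ Finset.range n, ‖gradient L (Θ t)‖ ^ 2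
      ≤ L (Θ 0) - L (Θ n) := by
    intro n
    induction n with
    | zero => simp
    | succ n ih =>
      rw [Finset.sum_range_succ]
      have := hstep' n
      nlinarith
  set m := (Finset.range T).inf' (Finset.nonempty_range_iff.mpr (Nat.pos_iff_ne_zero.mp hT))
      (fun t => ‖gradient L (Θ t)‖ ^ 2) with hm
  have hmle : (T : ℝ) * m ≤ ∑ t ∈ Finset.range T, ‖gradient L (Θ t)‖ ^ 2 := by
    calc (T : ℝ) * m = ∑ _t ∈ Finset.range T, m := by simp [mul_comm]
    _ ≤ _ := Finset.sum_le_sum fun t ht => Finset.inf'_le _ ht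
  have hT' : (0 : ℝ) < T := by exact_mod_cast hT
  have key : η / 2 * ((T : ℝ) * m) ≤ L (Θ 0) - Lstar := by
    nlinarith [hsum T, hlb (Θ T), mul_le_mul_of_nonneg_left hmle (by linarith : (0:ℝ) ≤ η / 2)]
  rw [le_div_iff₀ (by positivity)]
  nlinarith [key]
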